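/- If an approximate encoded permutation has deviation at most ε ≤ 1/2, then the trace distance between the actual output state (obtained by encoding with a uniform superposition of coset values, applying the encoded permutation, and decoding) and the ideal output state is at most 2√ε. -/

import Mathlib

open Finset

set_option maxHeartbeats 1000000

private lemma norm_sq_onsum {ι E : Type*} [NormedAddCommGroup E] [InnerProductSpace ℂ E]
    {v : ι → E} (hv : Orthonormal ℂ v) (l : ι → ℂ) (s : Finset ι) :
    ‖∑ i ∈ s, l i • v i‖ ^ 2 = ∑ i ∈ s, ‖l i‖ ^ 2 := by
  rw [← inner_self_eq_norm_sq (𝕜 := ℂ), hv.inner_sum]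
  simp [RCLike.conj_mul, ← Complex.ofReal_pow]

/-- **Trace distance bound for approximate encoded permutations.** Let
`P = (G, u, E, v, C, L, f)` be an approximate encoded permutation whose deviation
(the maximum over `g` of the fraction of deviated coset values) is at most `ε ≤ 1/2`.
For any unit input `Σ_g a_g|g⟩`, with ideal output `|ψ_d⟩ = Σ_{g,c}(a_g/√|C|)|u(g),c⟩`
and actual output `|ψ_a⟩ = Σ_{g,c}(a_g/√|C|)|f⁻¹(v(f(g,c)))⟩` (states over the basis
`(G×C) ⊔ L`), the trace distance `√(1 − |⟨ψ_d|ψ_a⟩|²)` between the corresponding pure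
states is at most `2√ε`. -/
theorem trace_distance_bound {G E C L : Type*} [Fintype G] [Fintype C] [Fintype L]
    [DecidableEq E] [DecidableEq G] [DecidableEq C] [DecidableEq L] [Nonempty C]
    (u : Equiv.Perm G) (v : Equiv.Perm E) (f : (G × C) ⊕ L ≃ E)
    (ε : ℝ) (hε : ε ≤ 1 / 2)
    (hdev : ∀ g : G,
      (((Finset.univ.filter fun c : C =>
            ∀ c' : C, v (f (Sum.inl (g, c))) ≠ f (Sum.inl (u g, c'))).card : ℝ) /
          Fintype.card C) ≤ ε)
    (a : G → ℂ) (ha : ∑ g, ‖a g‖ ^ 2 = 1) :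
    Real.sqrt (1 -
      ‖∑ x : (G × C) ⊕ L,
          (starRingEnd ℂ)
            (∑ g : G, ∑ c : C,
              (a g / (Real.sqrt (Fintype.card C) : ℂ)) *
                if x = Sum.inl (u g, c) then 1 else 0) *
          (∑ g : G, ∑ c : C,
            (a g / (Real.sqrt (Fintype.card C) : ℂ)) *
              if x = f.symm (v (f (Sum.inl (g, c)))) then 1 else 0)‖ ^ 2) ≤
      2 * Real.sqrt ε := by
  classical
  have hCpos : (0:ℝ) < (Fintype.card C : ℝ) := by exact_mod_cast Fintype.card_pos
  have hG : Nonempty G := by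
    by_contra h
    rw [not_nonempty_iff] at h
    simp at ha
  have hε0 : (0:ℝ) ≤ ε := le_trans (by positivity) (hdev (Classical.arbitrary G))
  have hbnorm : ∀ g : G, ‖a g / (Real.sqrt (Fintype.card C) : ℂ)‖ ^ 2
      = ‖a g‖ ^ 2 / Fintype.card C := by
    intro g
    rw [norm_div, div_pow, Complex.norm_real, Real.norm_eq_abs,
      abs_of_nonneg (Real.sqrt_nonneg _), Real.sq_sqrt hCpos.le]
  -- the two injections
  set e1 : G × C → (G × C) ⊕ L := fun gc => Sum.inl (u gc.1, gc.2) with he1def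
  set e2 : G × C → (G × C) ⊕ L := fun gc => f.symm (v (f (Sum.inl gc))) with he2def
  have he1 : Function.Injective e1 := by
    intro x y hxy
    simp only [he1def, Sum.inl.injEq, Prod.mk.injEq] at hxy
    exact Prod.ext (u.injective hxy.1) hxy.2
  have he2 : Function.Injective e2 := fun x y h =>
    Sum.inl_injective (f.injective (v.injective (f.symm.injective h)))
  have hon1 : Orthonormal ℂ (fun gc : G × C => EuclideanSpace.single (e1 gc) (1:ℂ)) :=
    (EuclideanSpace.orthonormal_single (𝕜 := ℂ) (ι := (G × C) ⊕ L)).comp e1 he1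
  have hon2 : Orthonormal ℂ (fun gc : G × C => EuclideanSpace.single (e2 gc) (1:ℂ)) :=
    (EuclideanSpace.orthonormal_single (𝕜 := ℂ) (ι := (G × C) ⊕ L)).comp e2 he2
  -- the states
  set ψd : EuclideanSpace ℂ ((G × C) ⊕ L) :=
    ∑ gc : G × C, (a gc.1 / (Real.sqrt (Fintype.card C) : ℂ)) •
      EuclideanSpace.single (e1 gc) 1 with hψddef
  set ψa : EuclideanSpace ℂ ((G × C) ⊕ L) :=
    ∑ gc : G × C, (a gc.1 / (Real.sqrt (Fintype.card C) : ℂ)) •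
      EuclideanSpace.single (e2 gc) 1 with hψadef
  -- pointwise formula
  have happ : ∀ (e : G × C → (G × C) ⊕ L) (x : (G × C) ⊕ L),
      ((∑ gc : G × C, (a gc.1 / (Real.sqrt (Fintype.card C) : ℂ)) •
        EuclideanSpace.single (e gc) (1:ℂ)) x)
      = ∑ g : G, ∑ c : C, (a g / (Real.sqrt (Fintype.card C) : ℂ)) *
          (if x = e (g, c) then 1 else 0) := by
    intro e x
    rw [show ((∑ gc : G × C, (a gc.1 / (Real.sqrt (Fintype.card C) : ℂ)) •
        EuclideanSpace.single (e gc) (1:ℂ)) x)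
        = ∑ gc : G × C, ((a gc.1 / (Real.sqrt (Fintype.card C) : ℂ)) •
          EuclideanSpace.single (e gc) (1:ℂ)) x from by rw [WithLp.ofLp_sum]; exact Finset.sum_apply x _ _,
      Fintype.sum_prod_type]
    simp [EuclideanSpace.single_apply, mul_ite, mul_one, mul_zero]
  -- goal as inner product
  have hgoal : (∑ x : (G × C) ⊕ L,
      (starRingEnd ℂ)
        (∑ g : G, ∑ c : C,
          (a g / (Real.sqrt (Fintype.card C) : ℂ)) *
            if x = Sum.inl (u g, c) then 1 else 0) *
      (∑ g : G, ∑ c : C,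
        (a g / (Real.sqrt (Fintype.card C) : ℂ)) *
          if x = f.symm (v (f (Sum.inl (g, c)))) then 1 else 0))
      = (inner ℂ ψd ψa : ℂ) := by
    rw [PiLp.inner_apply]
    refine Finset.sum_congr rfl fun x _ => ?_
    rw [RCLike.inner_apply, hψddef, hψadef, happ e1 x, happ e2 x, mul_comm]
  -- norms are 1
  have hsum1 : ∀ gfun : G → Finset C,
      (∑ g : G, ∑ _c ∈ gfun g, ‖a g / (Real.sqrt (Fintype.card C) : ℂ)‖ ^ 2)
      = ∑ g : G, ((gfun g).card : ℝ) * (‖a g‖ ^ 2 / Fintype.card C) := by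
    intro gfun
    refine Finset.sum_congr rfl fun g _ => ?_
    rw [Finset.sum_const, hbnorm, nsmul_eq_mul]
  have hψd_sq : ‖ψd‖ ^ 2 = 1 := by
    rw [hψddef, norm_sq_onsum hon1, Fintype.sum_prod_type, hsum1 (fun _ => Finset.univ), ← ha]
    refine Finset.sum_congr rfl fun g _ => ?_
    rw [Finset.card_univ, mul_div_cancel₀ _ hCpos.ne']
  have hψa_sq : ‖ψa‖ ^ 2 = 1 := by
    rw [hψadef, norm_sq_onsum hon2, Fintype.sum_prod_type, hsum1 (fun _ => Finset.univ), ← ha]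
    refine Finset.sum_congr rfl fun g _ => ?_
    rw [Finset.card_univ, mul_div_cancel₀ _ hCpos.ne']
  -- deviated sets
  set D : G → Finset C := fun g => Finset.univ.filter fun c : C =>
      ∀ c' : C, v (f (Sum.inl (g, c))) ≠ f (Sum.inl (u g, c')) with hDdef
  -- the partial matching function
  have hexists : ∀ gc : G × C, ∃ c' : C,
      gc.2 ∉ D gc.1 → v (f (Sum.inl gc)) = f (Sum.inl (u gc.1, c')) := by
    rintro ⟨g, c⟩
    by_cases h : c ∈ D g
    · exact ⟨Classical.arbitrary C, fun h' => absurd h h'⟩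
    · simp only [hDdef, Finset.mem_filter, Finset.mem_univ, true_and, not_forall] at h
      obtain ⟨c', hc'⟩ := h
      exact ⟨c', fun _ => not_ne_iff.mp hc'⟩
  choose φ hφ using hexists
  have he2eq : ∀ g c, c ∉ D g → e2 (g, c) = e1 (g, φ (g, c)) := by
    intro g c hc
    rw [he1def, he2def]
    simp only
    rw [hφ (g, c) hc, Equiv.symm_apply_apply]
  have hφinj : ∀ g : G, Set.InjOn (fun c => φ (g, c)) ((Finset.univ \ D g : Finset C) : Set C) := by
    intro g c1 h1 c2 h2 h12
    have h1' : c1 ∉ D g := (Finset.mem_sdiff.mp (Finset.mem_coe.mp h1)).2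
    have h2' : c2 ∉ D g := (Finset.mem_sdiff.mp (Finset.mem_coe.mp h2)).2
    have hv1 := hφ (g, c1) h1'
    have hv2 := hφ (g, c2) h2'
    simp only at h12
    rw [h12] at hv1
    have : v (f (Sum.inl (g, c1))) = v (f (Sum.inl (g, c2))) := hv1.trans hv2.symm
    have := Sum.inl_injective (f.injective (v.injective this))
    exact congrArg Prod.snd this
  set S : G → Finset C := fun g => (Finset.univ \ D g).image (fun c => φ (g, c)) with hSdef
  -- the three pieces
  set A : EuclideanSpace ℂ ((G × C) ⊕ L) := ∑ g : G, ∑ c ∈ Finset.univ \ D g,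
      (a g / (Real.sqrt (Fintype.card C) : ℂ)) • EuclideanSpace.single (e2 (g, c)) 1 with hAdef
  set B2 : EuclideanSpace ℂ ((G × C) ⊕ L) := ∑ g : G, ∑ c ∈ D g,
      (a g / (Real.sqrt (Fintype.card C) : ℂ)) • EuclideanSpace.single (e2 (g, c)) 1 with hB2def
  set B1 : EuclideanSpace ℂ ((G × C) ⊕ L) := ∑ g : G, ∑ c ∈ Finset.univ \ S g,
      (a g / (Real.sqrt (Fintype.card C) : ℂ)) • EuclideanSpace.single (e1 (g, c)) 1 with hB1def
  have hsplit_a : ψa = A + B2 := by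
    rw [hψadef, Fintype.sum_prod_type, hAdef, hB2def, ← Finset.sum_add_distrib]
    exact Finset.sum_congr rfl fun g _ => (Finset.sum_sdiff (Finset.subset_univ (D g))).symm
  have hsplit_d : ψd = A + B1 := by
    rw [hψddef, Fintype.sum_prod_type, hAdef, hB1def, ← Finset.sum_add_distrib]
    refine Finset.sum_congr rfl fun g _ => ?_
    have himg : (∑ c ∈ Finset.univ \ D g,
        (a g / (Real.sqrt (Fintype.card C) : ℂ)) • EuclideanSpace.single (e2 (g, c)) (1:ℂ))
        = ∑ c' ∈ S g,
        (a g / (Real.sqrt (Fintype.card C) : ℂ)) • EuclideanSpace.single (e1 (g, c')) (1:ℂ) := by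
      rw [hSdef]
      rw [Finset.sum_image (fun x hx y hy h =>
        hφinj g (Finset.mem_coe.mpr hx) (Finset.mem_coe.mpr hy) h)]
      refine Finset.sum_congr rfl fun c hc => ?_
      rw [he2eq g c (Finset.mem_sdiff.mp hc).2]
    rw [himg, add_comm]
    exact (Finset.sum_sdiff (Finset.subset_univ (S g))).symm
  -- norm bounds on the pieces
  have hcardbound : ∀ (t : G → Finset C), (∀ g, (t g).card = (D g).card) →
      (∑ g : G, ∑ _c ∈ t g, ‖a g / (Real.sqrt (Fintype.card C) : ℂ)‖ ^ 2) ≤ ε := by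
    intro t ht
    rw [hsum1 t]
    calc ∑ g : G, ((t g).card : ℝ) * (‖a g‖ ^ 2 / Fintype.card C)
        ≤ ∑ g : G, ε * ‖a g‖ ^ 2 := by
          refine Finset.sum_le_sum fun g _ => ?_
          rw [ht g]
          have h1 : ((D g).card : ℝ) * (‖a g‖ ^ 2 / Fintype.card C)
              = (((D g).card : ℝ) / Fintype.card C) * ‖a g‖ ^ 2 := by ring
          rw [h1]
          exact mul_le_mul_of_nonneg_right (hdev g) (by positivity)
      _ = ε := by rw [← Finset.mul_sum, ha, mul_one]
  have hB2sq : ‖B2‖ ^ 2 ≤ ε := by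
    have hmem : ∀ p : G × C, p ∈ Finset.univ.filter (fun gc : G × C => gc.2 ∈ D gc.1) ↔
        p.1 ∈ Finset.univ ∧ p.2 ∈ D p.1 := by simp
    have hrepr : B2 = ∑ gc ∈ Finset.univ.filter (fun gc : G × C => gc.2 ∈ D gc.1),
        (a gc.1 / (Real.sqrt (Fintype.card C) : ℂ)) • EuclideanSpace.single (e2 gc) 1 := by
      rw [hB2def]
      exact (Finset.sum_finset_product (f := fun gc : G × C =>
        (a gc.1 / (Real.sqrt (Fintype.card C) : ℂ)) •
          EuclideanSpace.single (e2 gc) (1:ℂ)) _ _ _ hmem).symm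
    have hnormrepr : (∑ gc ∈ Finset.univ.filter (fun gc : G × C => gc.2 ∈ D gc.1),
        ‖a gc.1 / (Real.sqrt (Fintype.card C) : ℂ)‖ ^ 2)
        = ∑ g : G, ∑ _c ∈ D g, ‖a g / (Real.sqrt (Fintype.card C) : ℂ)‖ ^ 2 :=
      Finset.sum_finset_product (f := fun gc : G × C =>
        ‖a gc.1 / (Real.sqrt (Fintype.card C) : ℂ)‖ ^ 2) _ _ _ hmem
    rw [hrepr, norm_sq_onsum hon2, hnormrepr]
    exact hcardbound D (fun g => rfl)
  have hB1sq : ‖B1‖ ^ 2 ≤ ε := by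
    have hmem : ∀ p : G × C, p ∈ Finset.univ.filter (fun gc : G × C => gc.2 ∈ Finset.univ \ S gc.1) ↔
        p.1 ∈ Finset.univ ∧ p.2 ∈ Finset.univ \ S p.1 := by simp
    have hrepr : B1 = ∑ gc ∈ Finset.univ.filter (fun gc : G × C => gc.2 ∈ Finset.univ \ S gc.1),
        (a gc.1 / (Real.sqrt (Fintype.card C) : ℂ)) • EuclideanSpace.single (e1 gc) 1 := by
      rw [hB1def]
      exact (Finset.sum_finset_product (f := fun gc : G × C =>
        (a gc.1 / (Real.sqrt (Fintype.card C) : ℂ)) •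
          EuclideanSpace.single (e1 gc) (1:ℂ)) _ _ _ hmem).symm
    have hnormrepr : (∑ gc ∈ Finset.univ.filter (fun gc : G × C => gc.2 ∈ Finset.univ \ S gc.1),
        ‖a gc.1 / (Real.sqrt (Fintype.card C) : ℂ)‖ ^ 2)
        = ∑ g : G, ∑ _c ∈ Finset.univ \ S g, ‖a g / (Real.sqrt (Fintype.card C) : ℂ)‖ ^ 2 :=
      Finset.sum_finset_product (f := fun gc : G × C =>
        ‖a gc.1 / (Real.sqrt (Fintype.card C) : ℂ)‖ ^ 2) _ _ _ hmem
    rw [hrepr, norm_sq_onsum hon1, hnormrepr]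
    refine hcardbound _ fun g => ?_
    rw [Finset.card_sdiff_of_subset (Finset.subset_univ _), Finset.card_univ, hSdef]
    simp only
    rw [Finset.card_image_of_injOn (hφinj g), Finset.card_sdiff_of_subset (Finset.subset_univ _)]
    have h1 := Finset.card_le_univ (D g)
    have h2 : (Finset.univ : Finset C).card = Fintype.card C := Finset.card_univ
    omega
  have hB1n : ‖B1‖ ≤ Real.sqrt ε := by
    rw [← Real.sqrt_sq (norm_nonneg B1)]; exact Real.sqrt_le_sqrt hB1sq
  have hB2n : ‖B2‖ ≤ Real.sqrt ε := by
    rw [← Real.sqrt_sq (norm_nonneg B2)]; exact Real.sqrt_le_sqrt hB2sq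
  have hdiff : ‖ψd - ψa‖ ≤ 2 * Real.sqrt ε := by
    have hd : ψd - ψa = B1 - B2 := by rw [hsplit_d, hsplit_a]; abel
    rw [hd]
    calc ‖B1 - B2‖ ≤ ‖B1‖ + ‖B2‖ := norm_sub_le _ _
      _ ≤ Real.sqrt ε + Real.sqrt ε := add_le_add hB1n hB2n
      _ = 2 * Real.sqrt ε := by ring
  -- endgame
  rw [hgoal]
  have hre : 1 - RCLike.re (inner ℂ ψd ψa : ℂ) ≤ 2 * ε := by
    have h4 : ‖ψd - ψa‖ ^ 2 ≤ 4 * ε := by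
      calc ‖ψd - ψa‖ ^ 2 ≤ (2 * Real.sqrt ε) ^ 2 := pow_le_pow_left₀ (norm_nonneg _) hdiff 2
        _ = 4 * ε := by rw [mul_pow, Real.sq_sqrt hε0]; norm_num
    have heq := norm_sub_sq (𝕜 := ℂ) ψd ψa
    rw [hψd_sq, hψa_sq] at heq
    rw [heq] at h4
    linarith
  have hnormd : ‖ψd‖ = 1 := by
    rw [← Real.sqrt_sq (norm_nonneg ψd), hψd_sq, Real.sqrt_one]
  have hnorma : ‖ψa‖ = 1 := by
    rw [← Real.sqrt_sq (norm_nonneg ψa), hψa_sq, Real.sqrt_one]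
  have habs : ‖(inner ℂ ψd ψa : ℂ)‖ ≤ 1 := by
    simpa [hnormd, hnorma] using norm_inner_le_norm (𝕜 := ℂ) ψd ψa
  have habsre : |RCLike.re (inner ℂ ψd ψa : ℂ)| ≤ ‖(inner ℂ ψd ψa : ℂ)‖ := RCLike.abs_re_le_norm _
  have hresq : (RCLike.re (inner ℂ ψd ψa : ℂ)) ^ 2 ≤ ‖(inner ℂ ψd ψa : ℂ)‖ ^ 2 := by
    rw [← sq_abs]; exact pow_le_pow_left₀ (abs_nonneg _) habsre 2
  have hkey : 1 - ‖(inner ℂ ψd ψa : ℂ)‖ ^ 2 ≤ 4 * ε := by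
    obtain ⟨h1, h2⟩ := abs_le.mp habsre
    set r := RCLike.re (inner ℂ ψd ψa : ℂ) with hr
    set N := ‖(inner ℂ ψd ψa : ℂ)‖ with hN
    clear_value r N
    have hstep : (1 - r) * (1 + r) ≤ (2 * ε) * 2 :=
      mul_le_mul hre (by linarith) (by linarith) (by linarith)
    nlinarith [hresq]
  calc Real.sqrt (1 - ‖(inner ℂ ψd ψa : ℂ)‖ ^ 2) ≤ Real.sqrt (4 * ε) := Real.sqrt_le_sqrt hkey
    _ = 2 * Real.sqrt ε := by
        rw [show (4:ℝ) * ε = (2 * Real.sqrt ε) ^ 2 by rw [mul_pow, Real.sq_sqrt hε0]; ring]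
        exact Real.sqrt_sq (by positivity)
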